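/- arXiv:2406.10592 — 3 statements merged into one kernel-verified Lean document; each statement's English description precedes it below -/
import Mathlib

section
/- Let μ > 0 and f : [0,∞) → ℝ be continuous such that the improper Riemann integrals ∫₀^∞ sin(μs) f(s) ds and ∫₀^∞ cos(μs) f(s) ds converge. If y : [0,∞) → ℝ satisfies y'' + μ² y = f with initial values y(0) = (1/μ)∫₀^∞ sin(μs) f(s) ds and y'(0) = −∫₀^∞ cos(μs) f(s) ds, then y(t) → 0 as t → ∞. -/
open Real Filter MeasureTheory

theorem stmt0 (μ : ℝ) (hμ : 0 < μ) (f y y' : ℝ → ℝ) (hf : Continuous f)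
    (I₁ I₂ : ℝ)
    (hI₁ : Tendsto (fun T => ∫ s in (0:ℝ)..T, Real.sin (μ * s) * f s) atTop (nhds I₁))
    (hI₂ : Tendsto (fun T => ∫ s in (0:ℝ)..T, Real.cos (μ * s) * f s) atTop (nhds I₂))
    (hy : ∀ t ∈ Set.Ici (0:ℝ), HasDerivAt y (y' t) t)
    (hy' : ∀ t ∈ Set.Ici (0:ℝ), HasDerivAt y' (f t - μ ^ 2 * y t) t)
    (h0 : y 0 = (1 / μ) * I₁) (h0' : y' 0 = -I₂) :
    Tendsto y atTop (nhds 0) := by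
  set S : ℝ → ℝ := fun T => ∫ s in (0:ℝ)..T, Real.sin (μ * s) * f s with hS
  set C : ℝ → ℝ := fun T => ∫ s in (0:ℝ)..T, Real.cos (μ * s) * f s with hC
  have hs : ∀ t : ℝ, HasDerivAt (fun t => Real.sin (μ * t)) (μ * Real.cos (μ * t)) t := by
    intro t
    have := (Real.hasDerivAt_sin (μ * t)).comp t ((hasDerivAt_id t).const_mul μ)
    simpa [mul_comm, Function.comp_def] using this
  have hc : ∀ t : ℝ, HasDerivAt (fun t => Real.cos (μ * t)) (-(μ * Real.sin (μ * t))) t := by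
    intro t
    have := (Real.hasDerivAt_cos (μ * t)).comp t ((hasDerivAt_id t).const_mul μ)
    simpa [mul_comm, Function.comp_def] using this
  have hA : ∀ t ∈ Set.Ici (0:ℝ),
      HasDerivAt (fun t => μ * y t * Real.sin (μ * t) + y' t * Real.cos (μ * t))
        (Real.cos (μ * t) * f t) t := by
    intro t ht
    have h1 := (((hy t ht).const_mul μ).mul (hs t)).add ((hy' t ht).mul (hc t))
    refine h1.congr_deriv ?_
    ring
  have hB : ∀ t ∈ Set.Ici (0:ℝ),
      HasDerivAt (fun t => μ * y t * Real.cos (μ * t) - y' t * Real.sin (μ * t))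
        (-(Real.sin (μ * t) * f t)) t := by
    intro t ht
    have h1 := (((hy t ht).const_mul μ).mul (hc t)).sub ((hy' t ht).mul (hs t))
    refine h1.congr_deriv ?_
    ring
  have key : ∀ t : ℝ, 0 ≤ t →
      μ * y t = Real.sin (μ * t) * (C t - I₂) + Real.cos (μ * t) * (I₁ - S t) := by
    intro t ht
    have hmem : ∀ s ∈ Set.uIcc (0:ℝ) t, s ∈ Set.Ici (0:ℝ) := by
      intro s hs
      rw [Set.uIcc_of_le ht] at hs
      exact hs.1
    have hCint : C t = (μ * y t * Real.sin (μ * t) + y' t * Real.cos (μ * t))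
        - (μ * y 0 * Real.sin (μ * 0) + y' 0 * Real.cos (μ * 0)) := by
      exact intervalIntegral.integral_eq_sub_of_hasDerivAt
        (fun s hs => hA s (hmem s hs))
        (((Real.continuous_cos.comp (continuous_const.mul continuous_id)).mul
          hf).intervalIntegrable 0 t)
    have hSint : -(S t) = (μ * y t * Real.cos (μ * t) - y' t * Real.sin (μ * t))
        - (μ * y 0 * Real.cos (μ * 0) - y' 0 * Real.sin (μ * 0)) := by
      have := intervalIntegral.integral_eq_sub_of_hasDerivAt
        (fun s hs => hB s (hmem s hs))
        ((((Real.continuous_sin.comp (continuous_const.mul continuous_id)).mul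
          hf).neg).intervalIntegrable 0 t)
      rw [← this, intervalIntegral.integral_neg]
    have hy0 : μ * y 0 = I₁ := by
      rw [h0]; field_simp
    simp only [mul_zero, Real.sin_zero, Real.cos_zero, mul_one, mul_zero, sub_zero,
      zero_add, h0'] at hCint hSint
    have hsc := Real.sin_sq_add_cos_sq (μ * t)
    linear_combination (-(Real.sin (μ*t))) * hCint + (-(Real.cos (μ*t))) * hSint
      + Real.cos (μ*t) * hy0 - (μ * y t) * hsc
  have h1 : Tendsto (fun t => C t - I₂) atTop (nhds 0) := by
    simpa using hI₂.sub_const I₂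
  have h2 : Tendsto (fun t => I₁ - S t) atTop (nhds 0) := by
    simpa using (hI₁.const_sub I₁)
  have t1 : Tendsto (fun t => Real.sin (μ * t) * (C t - I₂)) atTop (nhds 0) := by
    have h1n : Tendsto (fun t => ‖C t - I₂‖) atTop (nhds 0) := by simpa using h1.norm
    apply squeeze_zero_norm _ h1n
    intro t
    rw [norm_mul]
    calc ‖Real.sin (μ * t)‖ * ‖C t - I₂‖ ≤ 1 * ‖C t - I₂‖ := by
          apply mul_le_mul_of_nonneg_right _ (norm_nonneg _)
          simpa using Real.abs_sin_le_one (μ * t)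
      _ = ‖C t - I₂‖ := one_mul _
  have t2 : Tendsto (fun t => Real.cos (μ * t) * (I₁ - S t)) atTop (nhds 0) := by
    have h2n : Tendsto (fun t => ‖I₁ - S t‖) atTop (nhds 0) := by simpa using h2.norm
    apply squeeze_zero_norm _ h2n
    intro t
    rw [norm_mul]
    calc ‖Real.cos (μ * t)‖ * ‖I₁ - S t‖ ≤ 1 * ‖I₁ - S t‖ := by
          apply mul_le_mul_of_nonneg_right _ (norm_nonneg _)
          simpa using Real.abs_cos_le_one (μ * t)
      _ = ‖I₁ - S t‖ := one_mul _
  have hμy : Tendsto (fun t => μ * y t) atTop (nhds 0) := by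
    apply Tendsto.congr' _ (by simpa using t1.add t2)
    filter_upwards [eventually_ge_atTop (0:ℝ)] with t ht
    exact (key t ht).symm
  have := hμy.const_mul μ⁻¹
  simp only [mul_zero] at this
  apply this.congr
  intro t
  field_simp
end

section
/- Let μ > 0 and f : [0,∞) → ℝ be continuous such that the improper integrals ∫₀^∞ sin(μs) f(s) ds and ∫₀^∞ cos(μs) f(s) ds converge. If y satisfies y'' + μ² y = f on [0,∞) and y(t) → 0 as t → ∞, then necessarily y(0) = (1/μ)∫₀^∞ sin(μs) f(s) ds and y'(0) = −∫₀^∞ cos(μs) f(s) ds. -/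
open Real Filter MeasureTheory

theorem stmt1 (μ : ℝ) (hμ : 0 < μ) (f y y' : ℝ → ℝ) (hf : Continuous f)
    (I₁ I₂ : ℝ)
    (hI₁ : Tendsto (fun T => ∫ s in (0:ℝ)..T, Real.sin (μ * s) * f s) atTop (nhds I₁))
    (hI₂ : Tendsto (fun T => ∫ s in (0:ℝ)..T, Real.cos (μ * s) * f s) atTop (nhds I₂))
    (hy : ∀ t ∈ Set.Ici (0:ℝ), HasDerivAt y (y' t) t)
    (hy' : ∀ t ∈ Set.Ici (0:ℝ), HasDerivAt y' (f t - μ ^ 2 * y t) t)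
    (hdecay : Tendsto y atTop (nhds 0)) :
    y 0 = (1 / μ) * I₁ ∧ y' 0 = -I₂ := by
  have hs : ∀ t : ℝ, HasDerivAt (fun t => Real.sin (μ * t)) (μ * Real.cos (μ * t)) t := by
    intro t
    simpa [mul_comm, Function.comp_def] using (Real.hasDerivAt_sin (μ * t)).comp t ((hasDerivAt_id t).const_mul μ)
  have hc : ∀ t : ℝ, HasDerivAt (fun t => Real.cos (μ * t)) (-(μ * Real.sin (μ * t))) t := by
    intro t
    have := (Real.hasDerivAt_cos (μ * t)).comp t ((hasDerivAt_id t).const_mul μ)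
    exact this.congr_deriv (by ring)
  set F₁ : ℝ → ℝ := fun t => Real.sin (μ * t) * y' t - μ * (Real.cos (μ * t) * y t) with hF₁
  set F₂ : ℝ → ℝ := fun t => Real.cos (μ * t) * y' t + μ * (Real.sin (μ * t) * y t) with hF₂
  have hdF₁ : ∀ t ∈ Set.Ici (0:ℝ), HasDerivAt F₁ (Real.sin (μ * t) * f t) t := by
    intro t ht
    have h := ((hs t).mul (hy' t ht)).sub (((hc t).mul (hy t ht)).const_mul μ)
    exact h.congr_deriv (by ring)
  have hdF₂ : ∀ t ∈ Set.Ici (0:ℝ), HasDerivAt F₂ (Real.cos (μ * t) * f t) t := by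
    intro t ht
    have h := ((hc t).mul (hy' t ht)).add (((hs t).mul (hy t ht)).const_mul μ)
    exact h.congr_deriv (by ring)
  have hint1 : ∀ T : ℝ, 0 ≤ T → (∫ s in (0:ℝ)..T, Real.sin (μ * s) * f s) = F₁ T - F₁ 0 := by
    intro T hT
    apply intervalIntegral.integral_eq_sub_of_hasDerivAt
    · intro t ht
      rw [Set.uIcc_of_le hT] at ht
      exact hdF₁ t ht.1
    · exact ((Real.continuous_sin.comp (continuous_const.mul continuous_id)).mul hf).intervalIntegrable 0 T
  have hint2 : ∀ T : ℝ, 0 ≤ T → (∫ s in (0:ℝ)..T, Real.cos (μ * s) * f s) = F₂ T - F₂ 0 := by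
    intro T hT
    apply intervalIntegral.integral_eq_sub_of_hasDerivAt
    · intro t ht
      rw [Set.uIcc_of_le hT] at ht
      exact hdF₂ t ht.1
    · exact ((Real.continuous_cos.comp (continuous_const.mul continuous_id)).mul hf).intervalIntegrable 0 T
  have htF₁ : Tendsto F₁ atTop (nhds (I₁ + F₁ 0)) := by
    have h : Tendsto (fun T => (∫ s in (0:ℝ)..T, Real.sin (μ * s) * f s) + F₁ 0)
        atTop (nhds (I₁ + F₁ 0)) := hI₁.add tendsto_const_nhds
    apply h.congr'
    filter_upwards [eventually_ge_atTop (0:ℝ)] with T hT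
    rw [hint1 T hT]; ring
  have htF₂ : Tendsto F₂ atTop (nhds (I₂ + F₂ 0)) := by
    have h : Tendsto (fun T => (∫ s in (0:ℝ)..T, Real.cos (μ * s) * f s) + F₂ 0)
        atTop (nhds (I₂ + F₂ 0)) := hI₂.add tendsto_const_nhds
    apply h.congr'
    filter_upwards [eventually_ge_atTop (0:ℝ)] with T hT
    rw [hint2 T hT]; ring
  -- bounded × decaying terms tend to 0
  have hcy : Tendsto (fun T => μ * (Real.cos (μ * T) * y T)) atTop (nhds 0) := by
    have habs : Tendsto (fun T => μ * |y T|) atTop (nhds 0) := by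
      have := (hdecay.abs.const_mul μ)
      simpa using this
    apply squeeze_zero_norm _ habs
    intro T
    have h1 : |Real.cos (μ * T)| ≤ 1 := Real.abs_cos_le_one _
    calc ‖μ * (Real.cos (μ * T) * y T)‖ = μ * (|Real.cos (μ * T)| * |y T|) := by
          rw [Real.norm_eq_abs, abs_mul, abs_mul, abs_of_pos hμ]
      _ ≤ μ * (1 * |y T|) := by
          apply mul_le_mul_of_nonneg_left _ hμ.le
          exact mul_le_mul_of_nonneg_right h1 (abs_nonneg _)
      _ = μ * |y T| := by ring
  have hsy : Tendsto (fun T => μ * (Real.sin (μ * T) * y T)) atTop (nhds 0) := by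
    have habs : Tendsto (fun T => μ * |y T|) atTop (nhds 0) := by
      have := (hdecay.abs.const_mul μ)
      simpa using this
    apply squeeze_zero_norm _ habs
    intro T
    have h1 : |Real.sin (μ * T)| ≤ 1 := Real.abs_sin_le_one _
    calc ‖μ * (Real.sin (μ * T) * y T)‖ = μ * (|Real.sin (μ * T)| * |y T|) := by
          rw [Real.norm_eq_abs, abs_mul, abs_mul, abs_of_pos hμ]
      _ ≤ μ * (1 * |y T|) := by
          apply mul_le_mul_of_nonneg_left _ hμ.le
          exact mul_le_mul_of_nonneg_right h1 (abs_nonneg _)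
      _ = μ * |y T| := by ring
  -- so sin(μT) y'(T) and cos(μT) y'(T) converge
  have hA : Tendsto (fun T => Real.sin (μ * T) * y' T) atTop (nhds (I₁ + F₁ 0)) := by
    have := htF₁.add hcy
    simp only [add_zero] at this
    apply this.congr
    intro T; simp [hF₁]
  have hB : Tendsto (fun T => Real.cos (μ * T) * y' T) atTop (nhds (I₂ + F₂ 0)) := by
    have := htF₂.sub hsy
    simp only [sub_zero] at this
    apply this.congr
    intro T; simp [hF₂]
  -- subsequences
  have hu : Tendsto (fun n : ℕ => (2 * π / μ) * n) atTop atTop := by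
    apply Tendsto.const_mul_atTop (by positivity)
    exact tendsto_natCast_atTop_atTop
  have hv : Tendsto (fun n : ℕ => (π / 2 + 2 * π * n) / μ) atTop atTop := by
    apply Tendsto.atTop_div_const hμ
    apply tendsto_atTop_add_const_left
    apply Tendsto.const_mul_atTop (by positivity)
    exact tendsto_natCast_atTop_atTop
  have hAzero : I₁ + F₁ 0 = 0 := by
    have h1 : Tendsto (fun n : ℕ => Real.sin (μ * ((2 * π / μ) * n)) * y' ((2 * π / μ) * n))
        atTop (nhds (I₁ + F₁ 0)) := hA.comp hu
    have h2 : (fun n : ℕ => Real.sin (μ * ((2 * π / μ) * n)) * y' ((2 * π / μ) * n))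
        = fun _ => (0:ℝ) := by
      funext n
      have harg : μ * ((2 * π / μ) * n) = (2 * n : ℕ) * π := by
        push_cast; field_simp
      rw [harg, Real.sin_nat_mul_pi, zero_mul]
    rw [h2] at h1
    exact tendsto_nhds_unique h1 tendsto_const_nhds
  have hBzero : I₂ + F₂ 0 = 0 := by
    have h1 : Tendsto (fun n : ℕ => Real.cos (μ * ((π / 2 + 2 * π * n) / μ)) *
        y' ((π / 2 + 2 * π * n) / μ)) atTop (nhds (I₂ + F₂ 0)) := hB.comp hv
    have h2 : (fun n : ℕ => Real.cos (μ * ((π / 2 + 2 * π * n) / μ)) *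
        y' ((π / 2 + 2 * π * n) / μ)) = fun _ => (0:ℝ) := by
      funext n
      have harg : μ * ((π / 2 + 2 * π * n) / μ) = π / 2 + (2 * n : ℕ) * π := by
        push_cast; field_simp
      rw [harg, Real.cos_add]
      have h3 : Real.sin ((2*n:ℕ) * π) = 0 := Real.sin_nat_mul_pi _
      push_cast at h3 ⊢
      simp [h3]
    rw [h2] at h1
    exact tendsto_nhds_unique h1 tendsto_const_nhds
  have hF₁0 : F₁ 0 = -(μ * y 0) := by simp [hF₁]
  have hF₂0 : F₂ 0 = y' 0 := by simp [hF₂]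
  rw [hF₁0] at hAzero
  rw [hF₂0] at hBzero
  constructor
  · field_simp
    linarith
  · linarith
end

section
/- Let μ > 0 and f continuous on [0,∞) with convergent improper integrals ∫₀^∞ sin(μs) f(s) ds and ∫₀^∞ cos(μs) f(s) ds. Then the problem y'' + μ² y = f on [0,∞), with the condition lim_{t→∞} y(t) = 0, has exactly one twice differentiable solution. -/
open Real Filter MeasureTheory

/-- Any function with derivative `0` at every point of `[0,∞)` is constant there. -/
lemma const_of_deriv_zero_on_Ici {E : ℝ → ℝ} (h : ∀ t ∈ Set.Ici (0:ℝ), HasDerivAt E 0 t) :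
    ∀ t ∈ Set.Ici (0:ℝ), E t = E 0 := by
  intro t ht
  have := constant_of_has_deriv_right_zero (f := E) (a := 0) (b := t)
    (fun x hx => (h x hx.1).continuousAt.continuousWithinAt)
    (fun x hx => (h x (Set.mem_Ici.2 hx.1)).hasDerivWithinAt)
  exact this t ⟨ht, le_rfl⟩

theorem stmt3 (μ : ℝ) (hμ : 0 < μ) (f : ℝ → ℝ) (hf : Continuous f)
    (I₁ I₂ : ℝ)
    (hI₁ : Tendsto (fun T => ∫ s in (0:ℝ)..T, Real.sin (μ * s) * f s) atTop (nhds I₁))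
    (hI₂ : Tendsto (fun T => ∫ s in (0:ℝ)..T, Real.cos (μ * s) * f s) atTop (nhds I₂)) :
    ∃ y : ℝ → ℝ,
      ((∀ t ∈ Set.Ici (0:ℝ), HasDerivAt y (deriv y t) t ∧
          HasDerivAt (deriv y) (f t - μ ^ 2 * y t) t) ∧
        Tendsto y atTop (nhds 0)) ∧
      ∀ z : ℝ → ℝ,
        ((∀ t ∈ Set.Ici (0:ℝ), HasDerivAt z (deriv z t) t ∧
            HasDerivAt (deriv z) (f t - μ ^ 2 * z t) t) ∧
          Tendsto z atTop (nhds 0)) →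
        Set.EqOn z y (Set.Ici 0) := by
  have hμ' : μ ≠ 0 := ne_of_gt hμ
  -- the two antiderivatives
  set S : ℝ → ℝ := fun T => ∫ s in (0:ℝ)..T, Real.sin (μ * s) * f s with hSdef
  set C : ℝ → ℝ := fun T => ∫ s in (0:ℝ)..T, Real.cos (μ * s) * f s with hCdef
  have hScont : Continuous fun s => Real.sin (μ * s) * f s :=
    (Real.continuous_sin.comp (continuous_const.mul continuous_id)).mul hf
  have hCcont : Continuous fun s => Real.cos (μ * s) * f s :=
    (Real.continuous_cos.comp (continuous_const.mul continuous_id)).mul hf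
  have hS' : ∀ t : ℝ, HasDerivAt S (Real.sin (μ * t) * f t) t := fun t =>
    intervalIntegral.integral_hasDerivAt_right (hScont.intervalIntegrable _ _)
      hScont.aestronglyMeasurable.stronglyMeasurableAtFilter hScont.continuousAt
  have hC' : ∀ t : ℝ, HasDerivAt C (Real.cos (μ * t) * f t) t := fun t =>
    intervalIntegral.integral_hasDerivAt_right (hCcont.intervalIntegrable _ _)
      hCcont.aestronglyMeasurable.stronglyMeasurableAtFilter hCcont.continuousAt
  -- the solution
  set y : ℝ → ℝ := fun t =>
    μ⁻¹ * (Real.sin (μ * t) * (C t - I₂) - Real.cos (μ * t) * (S t - I₁)) with hydef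
  set y1 : ℝ → ℝ := fun t =>
    Real.cos (μ * t) * (C t - I₂) + Real.sin (μ * t) * (S t - I₁) with hy1def
  have hsin : ∀ t : ℝ, HasDerivAt (fun t => Real.sin (μ * t)) (μ * Real.cos (μ * t)) t := by
    intro t
    have := (Real.hasDerivAt_sin (μ * t)).comp t ((hasDerivAt_id t).const_mul μ)
    simpa [mul_comm, Function.comp_def] using this
  have hcos : ∀ t : ℝ, HasDerivAt (fun t => Real.cos (μ * t)) (-(μ * Real.sin (μ * t))) t := by
    intro t
    have := (Real.hasDerivAt_cos (μ * t)).comp t ((hasDerivAt_id t).const_mul μ)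
    simpa [mul_comm, Function.comp_def] using this
  have hy' : ∀ t : ℝ, HasDerivAt y (y1 t) t := by
    intro t
    have h1 := ((hsin t).mul ((hC' t).sub_const I₂)).sub
      ((hcos t).mul ((hS' t).sub_const I₁))
    have h2 := h1.const_mul μ⁻¹
    refine h2.congr_deriv (Eq.symm ?_)
    field_simp [hy1def]
    ring
  have hy'' : ∀ t : ℝ, HasDerivAt y1 (f t - μ ^ 2 * y t) t := by
    intro t
    have h1 := ((hcos t).mul ((hC' t).sub_const I₂)).add
      ((hsin t).mul ((hS' t).sub_const I₁))
    refine h1.congr_deriv (Eq.symm ?_)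
    have hpy : Real.sin (μ * t) ^ 2 + Real.cos (μ * t) ^ 2 = 1 := Real.sin_sq_add_cos_sq _
    simp only [hydef]
    field_simp
    linear_combination (-(f t)) * hpy
  have hderiv_y : deriv y = y1 := funext fun t => (hy' t).deriv
  -- y tends to 0
  have hCtends : Tendsto (fun t => C t - I₂) atTop (nhds 0) := by
    simpa using hI₂.sub_const I₂
  have hStends : Tendsto (fun t => S t - I₁) atTop (nhds 0) := by
    simpa using hI₁.sub_const I₁
  have hytends : Tendsto y atTop (nhds 0) := by
    apply squeeze_zero_norm (a := fun t => μ⁻¹ * (|C t - I₂| + |S t - I₁|))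
    · intro t
      have h1 : |Real.sin (μ * t) * (C t - I₂)| ≤ |C t - I₂| := by
        rw [abs_mul]
        calc |Real.sin (μ * t)| * |C t - I₂| ≤ 1 * |C t - I₂| :=
              mul_le_mul_of_nonneg_right (Real.abs_sin_le_one _) (abs_nonneg _)
          _ = |C t - I₂| := one_mul _
      have h2 : |Real.cos (μ * t) * (S t - I₁)| ≤ |S t - I₁| := by
        rw [abs_mul]
        calc |Real.cos (μ * t)| * |S t - I₁| ≤ 1 * |S t - I₁| :=
              mul_le_mul_of_nonneg_right (Real.abs_cos_le_one _) (abs_nonneg _)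
          _ = |S t - I₁| := one_mul _
      have : ‖y t‖ = μ⁻¹ * |Real.sin (μ * t) * (C t - I₂) - Real.cos (μ * t) * (S t - I₁)| := by
        rw [hydef, Real.norm_eq_abs, abs_mul, abs_of_pos (inv_pos.2 hμ)]
      rw [this]
      apply mul_le_mul_of_nonneg_left _ (le_of_lt (inv_pos.2 hμ))
      calc |Real.sin (μ * t) * (C t - I₂) - Real.cos (μ * t) * (S t - I₁)|
          ≤ |Real.sin (μ * t) * (C t - I₂)| + |Real.cos (μ * t) * (S t - I₁)| := abs_sub _ _
        _ ≤ |C t - I₂| + |S t - I₁| := add_le_add h1 h2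
    · have := ((hCtends.abs.add hStends.abs).const_mul μ⁻¹)
      simpa using this
  refine ⟨y, ⟨fun t _ => ⟨hy' t |>.congr_deriv (hy' t).deriv.symm, by
      rw [hderiv_y]; exact hy'' t⟩, hytends⟩, ?_⟩
  -- uniqueness
  rintro z ⟨hz, hztends⟩ t ht
  -- the difference w and its derivative w1
  set w : ℝ → ℝ := fun t => z t - y t with hwdef
  set w1 : ℝ → ℝ := fun t => deriv z t - y1 t with hw1def
  have hw' : ∀ s ∈ Set.Ici (0:ℝ), HasDerivAt w (w1 s) s := fun s hs =>
    ((hz s hs).1).sub (hy' s)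
  have hw1' : ∀ s ∈ Set.Ici (0:ℝ), HasDerivAt w1 (-(μ ^ 2) * w s) s := by
    intro s hs
    have := ((hz s hs).2).sub (hy'' s)
    refine this.congr_deriv (Eq.symm ?_)
    ring
  have hwtends : Tendsto w atTop (nhds 0) := by
    simpa using hztends.sub hytends
  -- energy
  set E : ℝ → ℝ := fun s => (w1 s) ^ 2 + μ ^ 2 * (w s) ^ 2 with hEdef
  have hE' : ∀ s ∈ Set.Ici (0:ℝ), HasDerivAt E 0 s := by
    intro s hs
    have h1 := ((hw1' s hs).pow 2).add (((hw' s hs).pow 2).const_mul (μ ^ 2))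
    refine h1.congr_deriv (Eq.symm ?_)
    ring
  have hEconst : ∀ s ∈ Set.Ici (0:ℝ), E s = E 0 := const_of_deriv_zero_on_Ici hE'
  set c : ℝ := E 0 with hcdef
  have hc0 : 0 ≤ c := by
    have : (0:ℝ) ≤ (w1 0) ^ 2 + μ ^ 2 * (w 0) ^ 2 := by positivity
    simpa [hEdef] using this
  have hczero : c = 0 := by
    by_contra hcne
    have hcpos : 0 < c := lt_of_le_of_ne hc0 (Ne.symm hcne)
    -- choose T ≥ 0 with 2μ²w² ≤ c/2 beyond T
    have hsmall : ∀ᶠ s in atTop, 2 * μ ^ 2 * (w s) ^ 2 ≤ c / 2 := by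
      have hw2 : Tendsto (fun s => 2 * μ ^ 2 * (w s) ^ 2) atTop (nhds 0) := by
        have := ((hwtends.mul hwtends).const_mul (2 * μ ^ 2))
        simpa [pow_two, mul_assoc] using this
      have := hw2.eventually (ge_mem_nhds (half_pos hcpos))
      exact this.mono fun s hs => hs
    obtain ⟨T₀, hT₀⟩ := hsmall.exists_forall_of_atTop
    set T : ℝ := max T₀ 0 with hTdef
    have hT0 : (0:ℝ) ≤ T := le_max_right _ _
    -- g = w * w1, h = g - (c/2) t
    set g : ℝ → ℝ := fun s => w s * w1 s with hgdef
    have hg' : ∀ s ∈ Set.Ici (0:ℝ), HasDerivAt g (E s - 2 * μ ^ 2 * (w s) ^ 2) s := by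
      intro s hs
      have h1 := (hw' s hs).mul (hw1' s hs)
      refine h1.congr_deriv (Eq.symm ?_)
      simp only [hEdef]
      ring
    set h : ℝ → ℝ := fun s => g s - c / 2 * s with hhdef
    have hh' : ∀ s ∈ Set.Ici T, HasDerivAt h (E s - 2 * μ ^ 2 * (w s) ^ 2 - c / 2) s := by
      intro s hs
      have hs0 : s ∈ Set.Ici (0:ℝ) := le_trans hT0 hs
      have hid : HasDerivAt (fun s : ℝ => c / 2 * s) (c / 2) s := by
        simpa using (hasDerivAt_id s).const_mul (c / 2)
      exact (hg' s hs0).sub hid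
    have hhmono : MonotoneOn h (Set.Ici T) := by
      apply monotoneOn_of_deriv_nonneg (convex_Ici T)
      · exact fun s hs => ((hh' s hs).continuousAt).continuousWithinAt
      · intro s hs
        rw [interior_Ici] at hs
        exact ((hh' s (Set.mem_Ici.2 (le_of_lt hs))).differentiableAt).differentiableWithinAt
      · intro s hs
        rw [interior_Ici] at hs
        rw [(hh' s (Set.mem_Ici.2 (le_of_lt hs))).deriv]
        have hEs : E s = c := hEconst s (le_trans hT0 (le_of_lt hs))
        have := hT₀ s (le_trans (le_max_left _ _) (le_of_lt hs))
        rw [hEs]; linarith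
    -- hence g grows at least linearly, contradicting g → 0
    have hgbig : ∀ s ≥ T, g T + c / 2 * (s - T) ≤ g s := by
      intro s hs
      have := hhmono (Set.self_mem_Ici) (Set.mem_Ici.2 hs) hs
      simp only [hhdef] at this
      linarith
    have hgtop : Tendsto g atTop atTop := by
      apply tendsto_atTop_mono' _ (eventually_atTop.2 ⟨T, hgbig⟩)
      have hlin : Tendsto (fun s : ℝ => c / 2 * (s - T)) atTop atTop := by
        have := ((tendsto_atTop_add_const_right atTop (-T) tendsto_id).const_mul_atTop
          (half_pos hcpos))
        simpa [sub_eq_add_neg] using this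
      exact tendsto_atTop_add_const_left atTop (g T) hlin
    -- but g → 0
    have hw1bd : ∀ s ∈ Set.Ici (0:ℝ), |w1 s| ≤ Real.sqrt c := by
      intro s hs
      have hEs : E s = c := hEconst s hs
      have h1 : (w1 s) ^ 2 ≤ c := by
        have : (0:ℝ) ≤ μ ^ 2 * (w s) ^ 2 := by positivity
        simp only [hEdef] at hEs; linarith
      calc |w1 s| = Real.sqrt ((w1 s) ^ 2) := (Real.sqrt_sq_eq_abs _).symm
        _ ≤ Real.sqrt c := Real.sqrt_le_sqrt h1
    have hgzero : Tendsto g atTop (nhds 0) := by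
      apply squeeze_zero_norm' (a := fun s => |w s| * Real.sqrt c)
      · filter_upwards [eventually_ge_atTop (0:ℝ)] with s hs
        calc ‖g s‖ = |w s| * |w1 s| := abs_mul _ _
          _ ≤ |w s| * Real.sqrt c :=
            mul_le_mul_of_nonneg_left (hw1bd s hs) (abs_nonneg _)
      · have := hwtends.abs.mul_const (Real.sqrt c)
        simpa using this
    exact (hgtop.not_tendsto (disjoint_nhds_atTop 0).symm) hgzero
  -- from c = 0 conclude w t = 0
  have hEt : E t = 0 := by rw [hEconst t ht, hczero]
  have hwt : w t = 0 := by
    have h1 : (0:ℝ) ≤ (w1 t) ^ 2 := sq_nonneg _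
    have h2 : μ ^ 2 * (w t) ^ 2 ≤ 0 := by
      simp only [hEdef] at hEt; linarith
    have h3 : (w t) ^ 2 ≤ 0 := by
      have hμ2 : (0:ℝ) < μ ^ 2 := by positivity
      nlinarith
    have := le_antisymm h3 (sq_nonneg _)
    exact pow_eq_zero_iff (n := 2) (by norm_num) |>.1 this
  have : z t - y t = 0 := hwt
  linarith
end
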